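/- Let T be an essentially small triangulated category and (X, σ) a classifying support data for T. Then the map φ : X → Spec△(T), x ↦ σ^{-1}({x' ∈ X | x ∉ closure({x'})}), is a well-defined homeomorphism; moreover φ(x) = {M ∈ T | x ∉ σ(M)} and φ^{-1}(Supp△(M)) = σ(M) for all M ∈ T. -/

import Mathlib

open CategoryTheory Limits Pretriangulated

universe v u

variable (C : Type u) [Category.{v} C] [Preadditive C] [HasZeroObject C]
  [HasShift C ℤ] [∀ n : ℤ, (shiftFunctor C n).Additive] [Pretriangulated C]

/-- A thick subcategory of a (pre)triangulated category, modelled as a set of objects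
closed under isomorphisms, zero objects, shifts, extensions and direct summands. -/
structure ThickSubcat : Type (max u v) where
  set : Set C
  mem_of_iso : ∀ {X Y : C}, (X ≅ Y) → X ∈ set → Y ∈ set
  zero_mem : ∀ Z : C, IsZero Z → Z ∈ set
  shift_mem : ∀ (X : C) (n : ℤ), X ∈ set → X⟦n⟧ ∈ set
  ext_mem : ∀ T : Triangle C, T ∈ (distTriang C) → T.obj₁ ∈ set → T.obj₃ ∈ set → T.obj₂ ∈ set
  summand_mem : ∀ (X Y : C) (i : Y ⟶ X) (r : X ⟶ Y), i ≫ r = 𝟙 Y → X ∈ set → Y ∈ set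

lemma ThickSubcat.set_injective : Function.Injective (ThickSubcat.set (C := C)) := by
  rintro ⟨s, _, _, _, _, _⟩ ⟨t, _, _, _, _, _⟩ h
  cases h; rfl

instance : PartialOrder (ThickSubcat C) :=
  PartialOrder.lift ThickSubcat.set (ThickSubcat.set_injective C)

/-- A thick subcategory `P` is *prime* if there is a unique minimal element among the
thick subcategories properly containing `P`. -/
def IsPrimeThick (P : ThickSubcat C) : Prop :=
  ∃! X : ThickSubcat C, Minimal (fun Y : ThickSubcat C => P < Y) X

/-- The spectrum: the set of prime thick subcategories. -/
def SpecTri := {P : ThickSubcat C // IsPrimeThick C P}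

/-- The support of an object `M`. -/
def suppObj (M : C) : Set (SpecTri C) := {P | M ∉ P.1.set}

/-- The topology on the spectrum, with closed basis the supports `suppObj M`. -/
instance : TopologicalSpace (SpecTri C) :=
  TopologicalSpace.generateFrom {U | ∃ M : C, U = (suppObj C M)ᶜ}

/-- Let `(X, σ)` be a classifying support data for `T`: `σ` assigns closed subsets of the
noetherian sober space `X` satisfying the support-data axioms, and `σ, σ⁻¹` are mutually
inverse lattice isomorphisms between thick subcategories of `T` and specialization-closed
subsets of `X`. Then `φ : X → Spec△(T)`, `x ↦ σ⁻¹({x' | x ∉ closure {x'}})`, is a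
well-defined homeomorphism; moreover `φ(x) = {M | x ∉ σ(M)}` and
`φ⁻¹(Supp△(M)) = σ(M)` for all `M`. -/
theorem stmt12 [HasBinaryBiproducts C]
    (X : Type*) [TopologicalSpace X] [TopologicalSpace.NoetherianSpace X]
    [QuasiSober X] [T0Space X]
    (σ : C → Set X)
    (hclosed : ∀ M : C, IsClosed (σ M))
    (hzero : ∀ M : C, IsZero M → σ M = ∅)
    (hshift : ∀ (M : C) (n : ℤ), σ (M⟦n⟧) = σ M)
    (htri : ∀ T : Triangle C, T ∈ (distTriang C) → σ T.obj₂ ⊆ σ T.obj₁ ∪ σ T.obj₃)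
    (hsum : ∀ M N : C, σ (M ⊞ N) = σ M ∪ σ N)
    (hspcl : ∀ Tk : ThickSubcat C, StableUnderSpecialization (⋃ M ∈ Tk.set, σ M))
    (hinv1 : ∀ Tk : ThickSubcat C, {M : C | σ M ⊆ ⋃ N ∈ Tk.set, σ N} = Tk.set)
    (hinv2 : ∀ W : Set X, StableUnderSpecialization W →
        ∃ Tk : ThickSubcat C, Tk.set = {M : C | σ M ⊆ W} ∧ (⋃ M ∈ Tk.set, σ M) = W) :
    ∃ φ : X ≃ₜ SpecTri C,
      (∀ x : X, (φ x).1.set = {M : C | σ M ⊆ {x' : X | x ∉ closure {x'}}}) ∧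
      (∀ x : X, (φ x).1.set = {M : C | x ∉ σ M}) ∧
      (∀ M : C, ⇑φ ⁻¹' suppObj C M = σ M) := by
    classical
  -- Notation: `Y x = {x' | x ∉ closure {x'}}`, the "complement of the specializations of x".
  have hxY : ∀ x : X, x ∉ {x' : X | x ∉ closure {x'}} := by
    intro x hx
    exact hx (subset_closure rfl)
  have hmemY : ∀ (x : X) (M : C), σ M ⊆ {x' : X | x ∉ closure {x'}} ↔ x ∉ σ M := by
    intro x M
    constructor
    · intro h hx
      exact hxY x (h hx)
    · intro hx x' hx' hc
      exact hx (closure_minimal (Set.singleton_subset_iff.2 hx') (hclosed M) hc)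
  have hYspec : ∀ x : X, StableUnderSpecialization {x' : X | x ∉ closure {x'}} := by
    intro x z w hzw hz hxw
    exact hz (closure_minimal
      (Set.singleton_subset_iff.2 (specializes_iff_mem_closure.mp hzw)) isClosed_closure hxw)
  -- Choose the thick subcategory associated to each specialization-closed subset.
  choose Th hTh1 hTh2 using hinv2
  have hUsub : ∀ (Tk : ThickSubcat C) (M : C), M ∈ Tk.set → σ M ⊆ ⋃ N ∈ Tk.set, σ N := by
    intro Tk M hM
    exact Set.subset_biUnion_of_mem hM
  have hle : ∀ Tk Tk' : ThickSubcat C,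
      (⋃ N ∈ Tk.set, σ N) ⊆ (⋃ N ∈ Tk'.set, σ N) → Tk ≤ Tk' := by
    intro Tk Tk' h
    show Tk.set ⊆ Tk'.set
    intro M hM
    rw [← hinv1 Tk']
    exact Set.mem_setOf_eq ▸ (hUsub Tk M hM).trans h
  have hUmono : ∀ Tk Tk' : ThickSubcat C, Tk ≤ Tk' →
      (⋃ N ∈ Tk.set, σ N) ⊆ (⋃ N ∈ Tk'.set, σ N) := by
    intro Tk Tk' h
    exact Set.iUnion₂_subset fun M hM => hUsub Tk' M (h hM)
  have hVspec : ∀ (S : Set X), StableUnderSpecialization S → ∀ x : X,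
      StableUnderSpecialization (S ∪ closure {x}) := by
    intro S hS x a b hab ha
    rcases ha with h | h
    · exact Or.inl (hS hab h)
    · exact Or.inr (isClosed_closure.stableUnderSpecialization hab h)
  -- Key lemma: if `x ∉ U P` and `closure {x} ⊆ U P ∪ {x}`, then the thick subcategory
  -- corresponding to `U P ∪ closure {x}` is minimal among those strictly containing `P`.
  have key : ∀ (P : ThickSubcat C) (x : X), x ∉ (⋃ N ∈ P.set, σ N) →
      closure {x} ⊆ (⋃ N ∈ P.set, σ N) ∪ {x} →
      ∀ hV : StableUnderSpecialization ((⋃ N ∈ P.set, σ N) ∪ closure {x}),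
      Minimal (fun Y : ThickSubcat C => P < Y) (Th _ hV) := by
    intro P x hxS hxcl hV
    refine ⟨?_, ?_⟩
    · refine lt_of_le_of_ne ?_ ?_
      · show P.set ⊆ (Th _ hV).set
        intro M hM
        rw [hTh1]
        exact (hUsub P M hM).trans Set.subset_union_left
      · intro heq
        apply hxS
        have h2 := hTh2 _ hV
        rw [← heq] at h2
        rw [h2]
        exact Or.inr (subset_closure rfl)
    · intro Y' hY' hle'
      show Th _ hV ≤ Y'
      have h1 : (⋃ N ∈ P.set, σ N) ⊆ ⋃ N ∈ Y'.set, σ N := hUmono _ _ hY'.le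
      have h2 : (⋃ N ∈ Y'.set, σ N) ⊆ (⋃ N ∈ P.set, σ N) ∪ closure {x} := by
        rw [← hTh2 _ hV]
        exact hUmono _ _ hle'
      have h3 : ∃ z, z ∈ (⋃ N ∈ Y'.set, σ N) ∧ z ∉ ⋃ N ∈ P.set, σ N := by
        by_contra h
        push_neg at h
        exact hY'.2 (hle _ _ fun z hz => h z hz)
      obtain ⟨z, hz1, hz2⟩ := h3
      have hzx : z = x := by
        rcases h2 hz1 with h | h
        · exact absurd h hz2
        · rcases hxcl h with h' | h'
          · exact absurd h' hz2
          · exact h'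
      have hxY' : x ∈ ⋃ N ∈ Y'.set, σ N := hzx ▸ hz1
      have hclY' : closure {x} ⊆ ⋃ N ∈ Y'.set, σ N := fun w hw =>
        hspcl Y' (specializes_iff_mem_closure.mpr hw) hxY'
      apply hle
      rw [hTh2 _ hV]
      exact Set.union_subset h1 hclY'
  -- `closure {x} ⊆ Y x ∪ {x}`.
  have hxcl0 : ∀ x : X, closure {x} ⊆ {x' : X | x ∉ closure {x'}} ∪ {x} := by
    intro x z hz
    by_cases h : x ∈ closure ({z} : Set X)
    · right
      have h1 : x ⤳ z := specializes_iff_mem_closure.mpr hz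
      have h2 : z ⤳ x := specializes_iff_mem_closure.mpr h
      exact Set.mem_singleton_iff.mpr (h2.antisymm h1).eq
    · exact Or.inl h
  -- Each `σ⁻¹(Y x)` is prime.
  have hprime : ∀ x : X, IsPrimeThick C (Th _ (hYspec x)) := by
    intro x
    have hx1 : x ∉ ⋃ N ∈ (Th _ (hYspec x)).set, σ N := by
      rw [hTh2]
      exact hxY x
    have hxcl : closure {x} ⊆ (⋃ N ∈ (Th _ (hYspec x)).set, σ N) ∪ {x} := by
      rw [hTh2]
      exact hxcl0 x
    have hV := hVspec _ (hspcl (Th _ (hYspec x))) x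
    refine ⟨Th _ hV, key _ x hx1 hxcl hV, ?_⟩
    intro Q' hQ'
    have hPQ' : Th _ (hYspec x) < Q' := hQ'.1
    have h3 : ∃ z, z ∈ (⋃ N ∈ Q'.set, σ N) ∧ z ∉ ⋃ N ∈ (Th _ (hYspec x)).set, σ N := by
      by_contra h
      push_neg at h
      exact hPQ'.2 (hle _ _ fun z hz => h z hz)
    obtain ⟨z, hz1, hz2⟩ := h3
    have hzY : x ∈ closure ({z} : Set X) := by
      rw [hTh2] at hz2
      simpa using hz2
    have hxQ' : x ∈ ⋃ N ∈ Q'.set, σ N :=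
      hspcl Q' (specializes_iff_mem_closure.mpr hzY) hz1
    have hclQ' : closure {x} ⊆ ⋃ N ∈ Q'.set, σ N := fun w hw =>
      hspcl Q' (specializes_iff_mem_closure.mpr hw) hxQ'
    have hTQ' : Th _ hV ≤ Q' := by
      apply hle
      rw [hTh2 _ hV]
      exact Set.union_subset (hUmono _ _ hPQ'.le) hclQ'
    exact le_antisymm (hQ'.2 (key _ x hx1 hxcl hV).1 hTQ') hTQ'
  -- The map φ₀.
  let φ₀ : X → SpecTri C := fun x => ⟨Th _ (hYspec x), hprime x⟩
  have hset1 : ∀ x : X, (φ₀ x).1.set = {M : C | σ M ⊆ {x' : X | x ∉ closure {x'}}} := fun x =>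
    hTh1 _ (hYspec x)
  have hset2 : ∀ x : X, (φ₀ x).1.set = {M : C | x ∉ σ M} := by
    intro x
    rw [hset1 x]
    exact Set.ext fun M => hmemY x M
  -- Injectivity.
  have hinj : Function.Injective φ₀ := by
    intro a b hab
    have h2 : ({M : C | a ∉ σ M} : Set C) = {M : C | b ∉ σ M} := by
      rw [← hset2 a, ← hset2 b, hab]
    have hmem : ∀ M : C, b ∈ σ M → a ∈ σ M := by
      intro M h
      by_contra h'
      have : M ∈ {M : C | b ∉ σ M} := h2 ▸ h'
      exact this h
    have hmem' : ∀ M : C, a ∈ σ M → b ∈ σ M := by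
      intro M h
      by_contra h'
      have : M ∈ {M : C | a ∉ σ M} := h2.symm ▸ h'
      exact this h
    have hba : a ∈ closure ({b} : Set X) := by
      by_contra h
      have hbY : b ∈ ⋃ N ∈ (Th _ (hYspec a)).set, σ N := by
        rw [hTh2]
        exact h
      obtain ⟨M, hM, hbM⟩ : ∃ M, M ∈ (Th _ (hYspec a)).set ∧ b ∈ σ M := by
        simpa using hbY
      have haM : a ∉ σ M := by
        rw [hTh1] at hM
        exact (hmemY a M).mp hM
      exact haM (hmem M hbM)
    have hab' : b ∈ closure ({a} : Set X) := by
      by_contra h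
      have haY : a ∈ ⋃ N ∈ (Th _ (hYspec b)).set, σ N := by
        rw [hTh2]
        exact h
      obtain ⟨M, hM, haM⟩ : ∃ M, M ∈ (Th _ (hYspec b)).set ∧ a ∈ σ M := by
        simpa using haY
      have hbM : b ∉ σ M := by
        rw [hTh1] at hM
        exact (hmemY b M).mp hM
      exact hbM (hmem' M haM)
    exact ((specializes_iff_mem_closure.mpr hab').antisymm
      (specializes_iff_mem_closure.mpr hba)).eq
  -- Existence of "maximal" points of closed sets outside a given set.
  have maxpt : ∀ S F : Set X, IsClosed F → ∀ y, y ∈ F → y ∉ S →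
      ∃ x, x ∈ F ∧ x ∉ S ∧ closure {x} ⊆ S ∪ {x} := by
    intro S F hF y hyF hyS
    obtain ⟨Z, hZs, hmin⟩ := (wellFounded_lt (α := TopologicalSpace.Closeds X)).has_min
      {Z : TopologicalSpace.Closeds X | ∃ x, (x ∈ F ∧ x ∉ S) ∧ Z = ⟨closure {x}, isClosed_closure⟩}
      ⟨⟨closure {y}, isClosed_closure⟩, y, ⟨hyF, hyS⟩, rfl⟩
    obtain ⟨x, ⟨hxF, hxS⟩, rfl⟩ := hZs
    refine ⟨x, hxF, hxS, ?_⟩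
    intro z hz
    by_cases hzS : z ∈ S
    · exact Or.inl hzS
    right
    have hzF : z ∈ F := closure_minimal (Set.singleton_subset_iff.2 hxF) hF hz
    have hle' : (⟨closure {z}, isClosed_closure⟩ : TopologicalSpace.Closeds X) ≤
        ⟨closure {x}, isClosed_closure⟩ :=
      closure_minimal (Set.singleton_subset_iff.2 hz) isClosed_closure
    have heq : (⟨closure {z}, isClosed_closure⟩ : TopologicalSpace.Closeds X) =
        ⟨closure {x}, isClosed_closure⟩ :=
      hle'.lt_or_eq.resolve_left (hmin _ ⟨z, ⟨hzF, hzS⟩, rfl⟩)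
    have hcl : closure ({z} : Set X) = closure ({x} : Set X) :=
      congrArg (fun W : TopologicalSpace.Closeds X => (W : Set X)) heq
    have hx : x ∈ closure ({z} : Set X) := by
      rw [hcl]
      exact subset_closure rfl
    exact Set.mem_singleton_iff.mpr
      ((specializes_iff_mem_closure.mpr hx).antisymm (specializes_iff_mem_closure.mpr hz)).eq
  -- Surjectivity.
  have hsurj : Function.Surjective φ₀ := by
    rintro ⟨P, hP⟩
    have hPset : P.set = {M : C | σ M ⊆ ⋃ N ∈ P.set, σ N} := (hinv1 P).symm
    have hM₀ : ∃ M₀ : C, M₀ ∉ P.set := by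
      by_contra h
      push_neg at h
      obtain ⟨Q, hQ, _⟩ := hP
      exact hQ.1.2 fun M _ => h M
    obtain ⟨M₀, hM₀⟩ := hM₀
    have hy : ∃ y, y ∈ σ M₀ ∧ y ∉ ⋃ N ∈ P.set, σ N := by
      by_contra h
      push_neg at h
      exact hM₀ (hPset ▸ Set.mem_setOf_eq ▸ fun z hz => h z hz)
    obtain ⟨y, hy1, hy2⟩ := hy
    obtain ⟨x, hxF, hxS, hxcl⟩ := maxpt _ (σ M₀) (hclosed M₀) y hy1 hy2
    have hPx : P.set = {M : C | x ∉ σ M} := by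
      ext M
      constructor
      · intro hM hxM
        apply hxS
        have : σ M ⊆ ⋃ N ∈ P.set, σ N := hUsub P M hM
        exact this hxM
      · intro hxM
        by_contra hM
        have hz : ∃ z, z ∈ σ M ∧ z ∉ ⋃ N ∈ P.set, σ N := by
          by_contra h
          push_neg at h
          exact hM ((hinv1 P) ▸ Set.mem_setOf_eq ▸ fun z hz => h z hz)
        obtain ⟨z, hz1, hz2⟩ := hz
        obtain ⟨x', hx'F, hx'S, hx'cl⟩ := maxpt _ (σ M) (hclosed M) z hz1 hz2
        have h1 := key P x hxS hxcl (hVspec _ (hspcl P) x)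
        have h2 := key P x' hx'S hx'cl (hVspec _ (hspcl P) x')
        obtain ⟨Q, _, hQu⟩ := hP
        have e1 := hQu _ h1
        have e2 := hQu _ h2
        have hVV : (⋃ N ∈ P.set, σ N) ∪ closure {x} = (⋃ N ∈ P.set, σ N) ∪ closure {x'} := by
          rw [← hTh2 _ (hVspec _ (hspcl P) x), ← hTh2 _ (hVspec _ (hspcl P) x'), e1, e2]
        have hxmem : x ∈ (⋃ N ∈ P.set, σ N) ∪ closure {x'} := by
          rw [← hVV]
          exact Or.inr (subset_closure rfl)
        rcases hxmem with h | h
        · exact hxS h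
        · exact hxM (closure_minimal (Set.singleton_subset_iff.2 hx'F) (hclosed M) h)
    refine ⟨x, ?_⟩
    apply Subtype.ext
    apply ThickSubcat.set_injective
    show (Th _ (hYspec x)).set = P.set
    rw [hTh1, hPx]
    exact Set.ext fun M => hmemY x M
  -- Every closed subset of X is the support of some object.
  have hclosed_sigma : ∀ Z : Set X, IsClosed Z → ∃ M : C, σ M = Z := by
    by_contra hcon
    push_neg at hcon
    obtain ⟨Z, hZ, hZn⟩ := hcon
    obtain ⟨W, hWs, hWmin⟩ := (wellFounded_lt (α := TopologicalSpace.Closeds X)).has_min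
      {W : TopologicalSpace.Closeds X | ∀ M : C, σ M ≠ (W : Set X)}
      ⟨⟨Z, hZ⟩, fun M h => hZn M h⟩
    obtain ⟨O, hO⟩ := HasZeroObject.zero (C := C)
    by_cases hWe : (W : Set X) = ∅
    · exact hWs O (by rw [hzero O hO, hWe])
    by_cases hirr : IsIrreducible (W : Set X)
    · obtain ⟨p, hp⟩ := QuasiSober.sober hirr W.2
      have hWspec : StableUnderSpecialization (W : Set X) := W.2.stableUnderSpecialization
      have hpU : p ∈ ⋃ N ∈ (Th _ hWspec).set, σ N := by
        rw [hTh2]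
        exact hp ▸ subset_closure rfl
      obtain ⟨M, hM, hpM⟩ : ∃ M, M ∈ (Th _ hWspec).set ∧ p ∈ σ M := by
        simpa using hpU
      have h1 : σ M ⊆ (W : Set X) := by
        rw [hTh1] at hM
        exact hM
      have h2 : (W : Set X) ⊆ σ M := by
        rw [← hp]
        exact closure_minimal (Set.singleton_subset_iff.2 hpM) (hclosed M)
      exact hWs M (le_antisymm h1 h2)
    · have hne : (W : Set X).Nonempty := Set.nonempty_iff_ne_empty.mpr hWe
      have hpre : ¬ IsPreirreducible (W : Set X) := fun h => hirr ⟨hne, h⟩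
      rw [IsPreirreducible] at hpre
      push_neg at hpre
      obtain ⟨u, v, hu, hv, hWu, hWv, hWuv⟩ := hpre
      have hF1 : IsClosed ((W : Set X) \ u) := W.2.sdiff hu
      have hF2 : IsClosed ((W : Set X) \ v) := W.2.sdiff hv
      have hlt1 : (⟨_, hF1⟩ : TopologicalSpace.Closeds X) < W := by
        refine lt_of_le_of_ne (fun z hz => hz.1) ?_
        intro h
        obtain ⟨w, hwW, hwu⟩ := hWu
        have : w ∈ (W : Set X) \ u := by
          rw [show ((W : Set X) \ u) = ((⟨_, hF1⟩ : TopologicalSpace.Closeds X) : Set X) from rfl,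
            h]
          exact hwW
        exact this.2 hwu
      have hlt2 : (⟨_, hF2⟩ : TopologicalSpace.Closeds X) < W := by
        refine lt_of_le_of_ne (fun z hz => hz.1) ?_
        intro h
        obtain ⟨w, hwW, hwv⟩ := hWv
        have : w ∈ (W : Set X) \ v := by
          rw [show ((W : Set X) \ v) = ((⟨_, hF2⟩ : TopologicalSpace.Closeds X) : Set X) from rfl,
            h]
          exact hwW
        exact this.2 hwv
      have hM1 : ∃ M : C, σ M = (W : Set X) \ u := by
        by_contra h
        push_neg at h
        exact hWmin _ (fun M hM => h M hM) hlt1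
      have hM2 : ∃ M : C, σ M = (W : Set X) \ v := by
        by_contra h
        push_neg at h
        exact hWmin _ (fun M hM => h M hM) hlt2
      obtain ⟨M₁, hM1⟩ := hM1
      obtain ⟨M₂, hM2⟩ := hM2
      refine hWs (M₁ ⊞ M₂) ?_
      rw [hsum, hM1, hM2]
      ext z
      constructor
      · rintro (⟨h, _⟩ | ⟨h, _⟩) <;> exact h
      · intro hz
        by_cases hzu : z ∈ u
        · refine Or.inr ⟨hz, fun hzv => ?_⟩
          exact Set.eq_empty_iff_forall_notMem.mp hWuv z ⟨hz, hzu, hzv⟩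
        · exact Or.inl ⟨hz, hzu⟩
  -- Preimage of supports.
  have hpre' : ∀ M : C, φ₀ ⁻¹' suppObj C M = σ M := by
    intro M
    ext x
    show M ∉ (φ₀ x).1.set ↔ x ∈ σ M
    rw [hset2 x]
    simp
  -- Continuity.
  have hcont : Continuous φ₀ := by
    have : @Continuous X (SpecTri C) _ (TopologicalSpace.generateFrom {U | ∃ M : C, U = (suppObj C M)ᶜ}) φ₀ := by
      rw [continuous_generateFrom_iff]
      rintro s ⟨M, rfl⟩
      rw [Set.preimage_compl, hpre']
      exact (hclosed M).isOpen_compl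
    exact this
  -- Openness.
  have hopen : IsOpenMap φ₀ := by
    intro u hu
    obtain ⟨M, hM⟩ := hclosed_sigma uᶜ (isClosed_compl_iff.mpr hu)
    have himg : φ₀ '' u = (suppObj C M)ᶜ := by
      ext P
      constructor
      · rintro ⟨x, hxu, rfl⟩
        intro hP
        apply hP
        rw [hset2 x]
        show x ∉ σ M
        rw [hM]
        exact fun h => h hxu
      · intro hP
        obtain ⟨x, rfl⟩ := hsurj P
        have hM' : M ∈ (φ₀ x).1.set := not_not.mp hP
        rw [hset2 x] at hM'
        refine ⟨x, ?_, rfl⟩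
        have : x ∉ uᶜ := hM ▸ hM'
        exact not_not.mp this
    rw [himg]
    exact TopologicalSpace.isOpen_generateFrom_of_mem ⟨M, rfl⟩
  exact ⟨Equiv.toHomeomorphOfContinuousOpen (Equiv.ofBijective φ₀ ⟨hinj, hsurj⟩) hcont hopen,
    fun x => hset1 x, fun x => hset2 x, fun M => hpre' M⟩
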